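/- Let p be a prime number, let G be the alternating group on p letters, and let H, H' be subgroups of G of index p forming a Gassmann triple (G, H, H'). Then H and H' are conjugate subgroups of G. -/

import Mathlib

/-- A Gassmann triple `(G, H, H')`: every `g : G` has the same number of `G`-conjugates
in `H` as in `H'`. -/
def IsGassmannTriple {G : Type*} [Group G] (H H' : Subgroup G) : Prop :=
  ∀ g : G, Nat.card {h : H // IsConj g (h : G)} = Nat.card {h : H' // IsConj g (h : G)}

open Equiv MulAction

private lemma fact_lt_aux (p : ℕ) : ∀ a, 2 ≤ a → 2 * a ≤ p →
    a.factorial * (p - a).factorial < (p - 1).factorial := by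
  intro a h2
  induction a, h2 using Nat.le_induction with
  | base =>
    intro hp4
    have h1 : p - 1 = (p - 2) + 1 := by omega
    rw [h1, Nat.factorial_succ]
    show 2 * (p - 2).factorial < (p - 2 + 1) * (p - 2).factorial
    exact Nat.mul_lt_mul_of_lt_of_le (by omega) le_rfl (Nat.factorial_pos _)
  | succ a ha ih =>
    intro hp
    have IH := ih (by omega)
    refine lt_of_le_of_lt ?_ IH
    have h1 : p - a = (p - (a + 1)) + 1 := by omega
    rw [Nat.factorial_succ, h1, Nat.factorial_succ, mul_assoc,
      mul_left_comm (a.factorial)]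
    exact Nat.mul_le_mul_right _ (by omega)

private lemma fact_lt (p a : ℕ) (h2 : 2 ≤ a) (h2' : a + 2 ≤ p) :
    a.factorial * (p - a).factorial < (p - 1).factorial := by
  rcases le_or_gt (2 * a) p with h | h
  · exact fact_lt_aux p a h2 h
  · have := fact_lt_aux p (p - a) (by omega) (by omega)
    rwa [Nat.sub_sub_self (by omega), mul_comm] at this

private lemma alternating_pretransitive (p : ℕ) (hp3 : 3 ≤ p) :
    MulAction.IsPretransitive (alternatingGroup (Fin p)) (Fin p) := by
  constructor
  intro i j
  rcases eq_or_ne i j with rfl | hij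
  · exact ⟨1, rfl⟩
  · have hk : ∃ k : Fin p, k ≠ i ∧ k ≠ j := by
      by_contra h
      push_neg at h
      have hsub : (Finset.univ : Finset (Fin p)) ⊆ {i, j} := by
        intro k _
        simp only [Finset.mem_insert, Finset.mem_singleton]
        rcases eq_or_ne k i with rfl | hki
        · exact Or.inl rfl
        · exact Or.inr (h k hki)
      have h1 := Finset.card_le_card hsub
      have h2 : ({i, j} : Finset (Fin p)).card ≤ 2 :=
        (Finset.card_insert_le i {j}).trans (by simp)
      simp [Finset.card_univ] at h1
      omega
    obtain ⟨k, hki, hkj⟩ := hk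
    refine ⟨⟨Equiv.swap i j * Equiv.swap j k, ?_⟩, ?_⟩
    · rw [Equiv.Perm.mem_alternatingGroup, map_mul,
        Equiv.Perm.sign_swap hij, Equiv.Perm.sign_swap (Ne.symm hkj)]
      simp
    · show (Equiv.swap i j * Equiv.swap j k) i = j
      rw [Equiv.Perm.mul_apply, Equiv.swap_apply_of_ne_of_ne hij (Ne.symm hki),
        Equiv.swap_apply_left]

private lemma index_p_fixed_point (p : ℕ) (hp : p.Prime) (hp3 : 3 ≤ p)
    (K : Subgroup (alternatingGroup (Fin p)))
    (hcard : 2 * Nat.card K = (p - 1).factorial) :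
    ∃ i : Fin p, ∀ k : K, ((k : alternatingGroup (Fin p)) : Equiv.Perm (Fin p)) i = i := by
  classical
  haveI : NeZero p := ⟨by omega⟩
  by_contra hfix
  push_neg at hfix
  -- every orbit has at least 2 elements
  have horb2 : ∀ i : Fin p, 2 ≤ Nat.card (MulAction.orbit K i) := by
    intro i
    obtain ⟨k, hk⟩ := hfix i
    refine Finite.one_lt_card_iff_nontrivial.mpr
      ⟨⟨k • i, MulAction.mem_orbit i k⟩, ⟨i, MulAction.mem_orbit_self i⟩, ?_⟩
    simp only [ne_eq, Subtype.mk.injEq]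
    exact hk
  set O : Set (Fin p) := MulAction.orbit K (0 : Fin p) with hO
  set a : ℕ := Nat.card O with hadef
  have ha2 : 2 ≤ a := horb2 0
  clear_value a
  -- O is invariant
  have hinv : ∀ (k : K) (i : Fin p), i ∈ O ↔
      ((k : alternatingGroup (Fin p)) : Equiv.Perm (Fin p)) i ∈ O := by
    intro k i
    constructor
    · intro hi
      obtain ⟨g, hg⟩ := hi
      refine ⟨k * g, ?_⟩
      show (k * g) • (0 : Fin p) = _
      rw [mul_smul]
      rw [show g • (0 : Fin p) = i from hg]
      rfl
    · intro hi
      obtain ⟨g, hg⟩ := hi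
      refine ⟨k⁻¹ * g, ?_⟩
      show (k⁻¹ * g) • (0 : Fin p) = i
      rw [mul_smul]
      rw [show g • (0 : Fin p) = _ from hg]
      show k⁻¹ • (k • i) = i
      simp
  -- a ∣ Nat.card K
  have hdvd : a ∣ Nat.card K := by
    rw [hadef, Nat.card_coe_set_eq, hO, ← MulAction.index_stabilizer]
    exact Subgroup.index_dvd_card _
  -- a ≠ p
  have hap : a ≤ p := by
    have h := Nat.card_le_card_of_injective (Subtype.val : O → Fin p) Subtype.val_injective
    rw [Nat.card_eq_fintype_card (α := Fin p), Fintype.card_fin] at h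
    exact hadef ▸ h
  have hanep : a ≠ p := by
    intro h
    have hpk : p ∣ Nat.card K := h ▸ hdvd
    have : p ∣ (p - 1).factorial := hcard ▸ hpk.mul_left 2
    exact absurd (Nat.Prime.dvd_factorial hp |>.mp this) (by omega)
  -- find a point outside O
  have hj : ∃ j : Fin p, j ∉ O := by
    by_contra h
    push_neg at h
    have huniv : O = Set.univ := Set.eq_univ_iff_forall.mpr h
    apply hanep
    rw [hadef, huniv, Nat.card_coe_set_eq, Set.ncard_univ, Nat.card_eq_fintype_card,
      Fintype.card_fin]
  obtain ⟨j, hjO⟩ := hj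
  -- the orbit of j is disjoint from O
  have hdisj : Disjoint O (MulAction.orbit K j) := by
    rw [Set.disjoint_right]
    rintro x ⟨g, rfl⟩ hx
    apply hjO
    have h1 := (hinv g⁻¹ (g • j)).mp hx
    have h2 : ((g⁻¹ : K) : alternatingGroup (Fin p)).val (g • j) = j := by
      show g⁻¹ • (g • j) = j
      simp
    rwa [h2] at h1
  have hsum : a + 2 ≤ p := by
    have h1 : (O ∪ MulAction.orbit K j).ncard ≤ p := by
      have := Set.ncard_le_ncard (Set.subset_univ (O ∪ MulAction.orbit K j)) Set.finite_univ
      simpa [Set.ncard_univ] using this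
    rw [Set.ncard_union_eq hdisj (Set.toFinite _) (Set.toFinite _)] at h1
    have h2 : 2 ≤ (MulAction.orbit K j).ncard := by
      rw [← Nat.card_coe_set_eq]; exact horb2 j
    have h3 : a = O.ncard := by rw [hadef, Nat.card_coe_set_eq]
    omega
  -- now build the embedding into even pairs
  have hσmem : ∀ k : K, ∀ i : Fin p, i ∈ O ↔
      ((k : alternatingGroup (Fin p)) : Equiv.Perm (Fin p)) i ∈ O := hinv
  have hτmem : ∀ k : K, ∀ i : Fin p, i ∈ Oᶜ ↔
      ((k : alternatingGroup (Fin p)) : Equiv.Perm (Fin p)) i ∈ Oᶜ := by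
    intro k i
    simp only [Set.mem_compl_iff]
    exact not_congr (hinv k i)
  set σ : K → Equiv.Perm O := fun k =>
    Equiv.Perm.subtypePerm ((k : alternatingGroup (Fin p)) : Equiv.Perm (Fin p)) (fun i => (hσmem k i).symm)
    with hσdef
  set τ : K → Equiv.Perm (Oᶜ : Set (Fin p)) := fun k =>
    Equiv.Perm.subtypePerm ((k : alternatingGroup (Fin p)) : Equiv.Perm (Fin p)) (fun i => (hτmem k i).symm)
    with hτdef
  set e : (O : Set (Fin p)) ⊕ (Oᶜ : Set (Fin p)) ≃ Fin p := Equiv.Set.sumCompl O with hedef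
  have hdecomp : ∀ k : K, ((k : alternatingGroup (Fin p)) : Equiv.Perm (Fin p)) =
      e.permCongr (Equiv.sumCongr (σ k) (τ k)) := by
    intro k
    ext i
    simp only [Equiv.permCongr_apply]
    by_cases hi : i ∈ O
    · rw [hedef, Equiv.Set.sumCompl_symm_apply_of_mem hi]
      simp [hσdef, Equiv.Perm.subtypePerm_apply]
    · rw [hedef, Equiv.Set.sumCompl_symm_apply_of_notMem hi]
      simp [hτdef, Equiv.Perm.subtypePerm_apply]
  have hsign : ∀ k : K, Equiv.Perm.sign (σ k) * Equiv.Perm.sign (τ k) = 1 := by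
    intro k
    have h1 : Equiv.Perm.sign ((k : alternatingGroup (Fin p)) : Equiv.Perm (Fin p)) = 1 :=
      Equiv.Perm.mem_alternatingGroup.mp (k : alternatingGroup (Fin p)).2
    rw [hdecomp k, Equiv.Perm.sign_permCongr, Equiv.Perm.sign_sumCongr] at h1
    exact h1
  -- the sign homomorphism on the product
  set s : Equiv.Perm O × Equiv.Perm (Oᶜ : Set (Fin p)) →* ℤˣ :=
    (Equiv.Perm.sign.comp (MonoidHom.fst _ _)) * (Equiv.Perm.sign.comp (MonoidHom.snd _ _))
    with hsdef
  have hs_apply : ∀ x : Equiv.Perm O × Equiv.Perm (Oᶜ : Set (Fin p)),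
      s x = Equiv.Perm.sign x.1 * Equiv.Perm.sign x.2 := fun x => rfl
  set F : K → s.ker := fun k => ⟨(σ k, τ k), by
    rw [MonoidHom.mem_ker, hs_apply]; exact hsign k⟩ with hFdef
  have hFinj : Function.Injective F := by
    intro k1 k2 hk
    have h1 : σ k1 = σ k2 ∧ τ k1 = τ k2 := by
      have := Subtype.ext_iff.mp hk
      exact Prod.ext_iff.mp this
    have : ((k1 : alternatingGroup (Fin p)) : Equiv.Perm (Fin p)) =
        ((k2 : alternatingGroup (Fin p)) : Equiv.Perm (Fin p)) := by
      rw [hdecomp k1, hdecomp k2, h1.1, h1.2]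
    exact Subtype.ext (Subtype.ext this)
  have hKle : Nat.card K ≤ Nat.card s.ker := Nat.card_le_card_of_injective F hFinj
  -- nontriviality of O for sign surjectivity
  have hOnt : Nontrivial O := Finite.one_lt_card_iff_nontrivial.mp (hadef ▸ ha2)
  have hssurj : Function.Surjective s := by
    intro u
    obtain ⟨g, hg⟩ := Equiv.Perm.sign_surjective O u
    exact ⟨(g, 1), by rw [hs_apply]; simp [hg]⟩
  have hker2 : Nat.card s.ker * 2 = a.factorial * (p - a).factorial := by
    have h1 := Subgroup.card_mul_index s.ker
    rw [Subgroup.index_ker, MonoidHom.range_eq_top_of_surjective s hssurj] at h1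
    have h2 : Nat.card (⊤ : Subgroup ℤˣ) = 2 := by
      rw [Subgroup.card_top, Nat.card_eq_fintype_card, Fintype.card_units_int]
    rw [h2] at h1
    rw [h1, Nat.card_prod, Nat.card_eq_fintype_card, Nat.card_eq_fintype_card,
      Fintype.card_perm, Fintype.card_perm]
    congr 2
    · rw [hadef, Nat.card_eq_fintype_card]
    · rw [Fintype.card_compl_set, Fintype.card_fin, hadef, Nat.card_eq_fintype_card]
  have hlt := fact_lt p a ha2 hsum
  omega

private lemma card_alt (p : ℕ) (hp2 : 2 ≤ p) :
    2 * Nat.card (alternatingGroup (Fin p)) = p.factorial := by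
  haveI : Nontrivial (Fin p) := Fin.nontrivial_iff_two_le.mpr hp2
  rw [Nat.card_eq_fintype_card, two_mul_card_alternatingGroup, Fintype.card_perm,
    Fintype.card_fin]

/-- If `p` is prime, `G` is the alternating group on `p` letters and `(G, H, H')` is a
Gassmann triple with `H` and `H'` of index `p`, then `H` and `H'` are conjugate in `G`. -/
theorem gassmann_trivial_alternating_group (p : ℕ) (hp : p.Prime)
    (H H' : Subgroup (alternatingGroup (Fin p)))
    (hH : H.index = p) (hH' : H'.index = p) (hG : IsGassmannTriple H H') :
    ∃ x : alternatingGroup (Fin p), Subgroup.map (MulAut.conj x).toMonoidHom H = H' := by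
  classical
  have hp2 := hp.two_le
  have hcardG := card_alt p hp2
  -- cardinality of an index-p subgroup
  have hcard2 : ∀ K : Subgroup (alternatingGroup (Fin p)), K.index = p →
      2 * Nat.card K = (p - 1).factorial := by
    intro K hK
    have h1 := Subgroup.card_mul_index K
    rw [hK] at h1
    have h2 : 2 * (Nat.card K * p) = p.factorial := by rw [h1, hcardG]
    have h3 : p.factorial = (p - 1).factorial * p := by
      conv_lhs => rw [show p = (p - 1) + 1 by omega]
      rw [Nat.factorial_succ, show p - 1 + 1 = p by omega, mul_comm]
    rw [h3, ← mul_assoc] at h2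
    exact Nat.eq_of_mul_eq_mul_right (by omega) h2
  -- rule out p = 2
  have hp3 : 3 ≤ p := by
    by_contra h
    have hKp : p = 2 := by omega
    have h1 := hcard2 H hH
    have h2 : 0 < Nat.card H := Nat.card_pos
    subst hKp
    simp [Nat.factorial] at h1
  haveI htrans := alternating_pretransitive p hp3
  -- every index-p subgroup is a point stabilizer
  have hstab : ∀ K : Subgroup (alternatingGroup (Fin p)), K.index = p →
      ∃ i : Fin p, K = MulAction.stabilizer (alternatingGroup (Fin p)) i := by
    intro K hK
    obtain ⟨i, hi⟩ := index_p_fixed_point p hp hp3 K (hcard2 K hK)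
    refine ⟨i, ?_⟩
    have hle : K ≤ MulAction.stabilizer (alternatingGroup (Fin p)) i := by
      intro k hk
      rw [MulAction.mem_stabilizer_iff]
      exact hi ⟨k, hk⟩
    have hidx : (MulAction.stabilizer (alternatingGroup (Fin p)) i).index = p := by
      rw [MulAction.index_stabilizer_of_transitive, Nat.card_eq_fintype_card, Fintype.card_fin]
    apply Subgroup.eq_of_le_of_card_ge hle
    have e1 := hcard2 K hK
    have e2 := hcard2 _ hidx
    omega
  obtain ⟨i, hi⟩ := hstab H hH
  obtain ⟨j, hj⟩ := hstab H' hH'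
  obtain ⟨x, hx⟩ := htrans.exists_smul_eq i j
  refine ⟨x, ?_⟩
  rw [hi, hj, ← hx, MulAction.stabilizer_smul_eq_stabilizer_map_conj]
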